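/- Value of the optimal contract (Theorem 3.5(ii) / equation for the value): With W* = (γ_P/(γ_A+γ_P))X_T^{a*} + β* and a*_t = κ*(1), one has the explicit value E[-exp(-γ_P(X_T^{a*} - W*))] = -exp(-γ_P(x₀ - y₀)) · exp(γ_P T(-κ̃(1) + γ_P γ_A/(2(γ_A+γ_P)))). In particular (W*, a*) attains the upper bound of Proposition 3.2 and is hence optimal for the risk-sharing problem. -/
import Mathlib

open MeasureTheory ProbabilityTheory Real

lemma pdf_mul_exp (v : NNReal) (hv : (v:ℝ) ≠ 0) (s x : ℝ) :
    gaussianPDFReal 0 v x * rexp (s * x)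
      = rexp (s^2 * v / 2) * gaussianPDFReal (s * v) v x := by
  simp only [gaussianPDFReal]
  rw [mul_assoc, ← Real.exp_add, mul_left_comm, ← Real.exp_add]
  congr 1
  rw [Real.exp_eq_exp]
  field_simp
  ring

lemma mgf_gauss (v : NNReal) (hv : v ≠ 0) (s : ℝ) :
    ∫ x, rexp (s * x) ∂(gaussianReal 0 v) = rexp (s^2 * v / 2) := by
  have hv' : (v:ℝ) ≠ 0 := by exact_mod_cast hv
  rw [gaussianReal_of_var_ne_zero _ hv]
  have h1 : (gaussianPDF 0 v) = fun x => ((gaussianPDFReal 0 v x).toNNReal : ENNReal) := rfl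
  rw [h1, integral_withDensity_eq_integral_smul
    ((measurable_gaussianPDFReal 0 v).real_toNNReal) (fun x => rexp (s * x))]
  have heq : ∀ x : ℝ, ((gaussianPDFReal 0 v x).toNNReal : NNReal) • rexp (s * x)
      = rexp (s^2 * v / 2) * gaussianPDFReal (s * v) v x := by
    intro x
    rw [NNReal.smul_def, smul_eq_mul, Real.coe_toNNReal _ (gaussianPDFReal_nonneg 0 v x),
      pdf_mul_exp v hv' s x]
  simp_rw [heq, integral_const_mul, integral_gaussianPDFReal_eq_one _ hv, mul_one]

theorem optimal_contract_value {Ω : Type*} [MeasurableSpace Ω]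
    (μ : Measure Ω) [IsProbabilityMeasure μ]
    (T x₀ y₀ γP γA κs1 : ℝ) (hT : 0 < T) (hP : 0 < γP) (hA : 0 < γA)
    (κ : ℝ → ℝ)
    (B : Ω → ℝ) (hB : Measurable B) (hlaw : μ.map B = gaussianReal 0 T.toNNReal)
    (X Wstar : Ω → ℝ) (hX : ∀ ω, X ω = x₀ + T * κs1 + B ω)
    (hWstar : ∀ ω, Wstar ω = γP / (γA + γP) * X ω +
      (T * γA * γP ^ 2 / (2 * (γA + γP) ^ 2) + y₀ + T * κ κs1 -
        γP / (γA + γP) * (x₀ + T * κs1))) :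
    ∫ ω, -Real.exp (-γP * (X ω - Wstar ω)) ∂μ =
      -Real.exp (-γP * (x₀ - y₀)) *
        Real.exp (γP * T * (-(κs1 - κ κs1) + γP * γA / (2 * (γA + γP)))) := by
  have hsum : γA + γP ≠ 0 := by positivity
  set s : ℝ := -γP * γA / (γA + γP) with hs
  set C : ℝ := -γP * (x₀ - y₀) - γP * T * (κs1 - κ κs1) +
      T * γA * γP ^ 3 / (2 * (γA + γP) ^ 2) with hC
  have key : ∀ ω, -γP * (X ω - Wstar ω) = C + s * B ω := by
    intro ω
    rw [hWstar ω, hX ω, hC, hs]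
    field_simp
    ring
  have hvT : T.toNNReal ≠ 0 := by
    simp [Real.toNNReal_eq_zero, not_le, hT]
  have hTc : ((T.toNNReal : ℝ)) = T := Real.coe_toNNReal T hT.le
  have hmap : ∫ ω, rexp (s * B ω) ∂μ = rexp (s ^ 2 * T / 2) := by
    rw [show s ^ 2 * T / 2 = s ^ 2 * (T.toNNReal : ℝ) / 2 by rw [hTc],
      ← mgf_gauss T.toNNReal hvT s, ← hlaw,
      integral_map hB.aemeasurable
        (Continuous.aestronglyMeasurable (by continuity))]
  calc ∫ ω, -Real.exp (-γP * (X ω - Wstar ω)) ∂μ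
      = ∫ ω, -(rexp C * rexp (s * B ω)) ∂μ := by
        congr 1; funext ω; rw [key ω, Real.exp_add]
    _ = -(rexp C * ∫ ω, rexp (s * B ω) ∂μ) := by
        rw [integral_neg, integral_const_mul]
    _ = -(rexp C * rexp (s ^ 2 * T / 2)) := by rw [hmap]
    _ = _ := by
        rw [← Real.exp_add, neg_mul, ← Real.exp_add, neg_inj, Real.exp_eq_exp]
        rw [hC, hs]
        field_simp
        ring
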